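/- Let σ : G ⇢ L be a regular support, r = rk(L), and let C ⊆ G be a non-trivial code (C ≠ {0} and C ≠ G) that is optimal, i.e. |C| = |G| / γ_σ(d − 1) where d = min{ω_σ(g) : g ∈ C, g ≠ 0}. Then the dual code C* ⊆ Ĝ has minimum weight d* = min{ω_{σ*}(χ) : χ ∈ C*, χ ≠ 1} satisfying d* ≥ r − d + 2, and C* is optimal for the dual support σ*, i.e. |C*| = |Ĝ| / γ_{σ*}(d* − 1). -/

import Mathlib

open Finset
open scoped Classical Pointwise

/-- A finite graded lattice of rank `r` (with rank function `ρ`) that is *regular*: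
the counting numbers `μ_≤`, `μ_≥` and the Möbius numbers `μ_L` depend only on ranks. -/
structure RegularLattice (L : Type*) [Lattice L] [BoundedOrder L] [Fintype L] where
  /-- the rank of the lattice -/
  r : ℕ
  /-- the rank function -/
  ρ : L → ℕ
  ρ_bot : ρ ⊥ = 0
  ρ_top : ρ ⊤ = r
  ρ_covby : ∀ S T : L, S ⋖ T → ρ T = ρ S + 1
  /-- the Möbius function of the lattice -/
  mu : L → L → ℤ
  mu_self : ∀ S : L, mu S S = 1
  mu_sum : ∀ S T : L, S < T → mu S T = - ∑ U : L, (if S ≤ U ∧ U < T then mu S U else 0)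
  /-- `μ_≤ s t` : the number of elements of rank `s` below an element of rank `t` -/
  muLE : ℕ → ℕ → ℕ
  card_le : ∀ (s : ℕ) (T : L), Nat.card {S : L // ρ S = s ∧ S ≤ T} = muLE s (ρ T)
  /-- `μ_≥ s t` : the number of elements of rank `s` above an element of rank `t` -/
  muGE : ℕ → ℕ → ℕ
  card_ge : ∀ (s : ℕ) (T : L), Nat.card {S : L // ρ S = s ∧ T ≤ S} = muGE s (ρ T)
  /-- `μ_L s t` : the common value of the Möbius function on pairs of ranks `s ≤ t`,
  with the convention `μ_L s t = 0` for `s > t` -/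
  muN : ℕ → ℕ → ℤ
  mu_eq : ∀ S T : L, S ≤ T → mu S T = muN (ρ S) (ρ T)
  muN_zero : ∀ s t : ℕ, t < s → muN s t = 0

/-- A regular support `σ : G ⇢ L` on a finite abelian group `G` with values in a
regular lattice `L`, together with its cardinality invariant `γ`. -/
structure RegularSupport (L : Type*) [Lattice L] [BoundedOrder L] [Fintype L]
    (G : Type*) [AddCommGroup G] [Fintype G] (RL : RegularLattice L) where
  /-- the support function -/
  σ : G → L
  supp_zero : ∀ g : G, σ g = ⊥ ↔ g = 0
  supp_neg : ∀ g : G, σ (-g) = σ g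
  supp_add : ∀ g₁ g₂ : G, σ (g₁ + g₂) ≤ σ g₁ ⊔ σ g₂
  supp_sup : ∀ S₁ S₂ : L,
    {g : G | σ g ≤ S₁ ⊔ S₂} = {g : G | σ g ≤ S₁} + {g : G | σ g ≤ S₂}
  /-- `γ s` : the common cardinality of `G_σ(S)` over elements `S` of rank `s` -/
  γ : ℕ → ℕ
  card_supp : ∀ S : L, Nat.card {g : G // σ g ≤ S} = γ (RL.ρ S)

/-- The dual support `σ* : Ĝ → L`, `σ*(χ) = ⋁ {S ∈ L : χ ∈ G_σ(S)*}`. -/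
noncomputable def RegularSupport.dualSupp {L : Type*} [Lattice L] [BoundedOrder L] [Fintype L]
    {G : Type*} [AddCommGroup G] [Fintype G] {RL : RegularLattice L}
    (RS : RegularSupport L G RL) (χ : AddChar G ℂˣ) : L :=
  (Finset.univ.filter (fun S : L => ∀ g : G, RS.σ g ≤ S → χ g = 1)).sup id

section Auxiliary

variable {L : Type*} [Lattice L] [BoundedOrder L] [Fintype L]

/-- The rank function of a regular lattice is strictly monotone. -/
lemma RegularLattice.rho_lt (RL : RegularLattice L) :
    ∀ S T : L, S < T → RL.ρ S < RL.ρ T := by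
  have wf : WellFounded ((· > ·) : L → L → Prop) := wellFounded_gt
  refine fun S => wf.induction (C := fun S => ∀ T, S < T → RL.ρ S < RL.ρ T) S ?_
  intro S IH T hST
  obtain ⟨U, hU, hUmin⟩ := (Finset.univ.filter fun V : L => S < V ∧ V ≤ T).exists_minimal
    ⟨T, by simp [hST]⟩
  simp only [Finset.mem_filter, Finset.mem_univ, true_and] at hU hUmin
  have hcovSU : S ⋖ U := ⟨hU.1, fun V h1 h2 => not_lt_of_ge (hUmin ⟨h1, h2.le.trans hU.2⟩ h2.le) h2⟩
  have hρU := RL.ρ_covby S U hcovSU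
  rcases eq_or_lt_of_le hU.2 with rfl | hUT
  · omega
  · have := IH U hU.1 T hUT
    omega

/-- Below any element of a regular lattice, every smaller rank is realized. -/
lemma RegularLattice.exists_rho_le (RL : RegularLattice L) :
    ∀ (T : L) (t : ℕ), t ≤ RL.ρ T → ∃ S, S ≤ T ∧ RL.ρ S = t := by
  have wf : WellFounded ((· < ·) : L → L → Prop) := wellFounded_lt
  refine fun T => wf.induction (C := fun T => ∀ t, t ≤ RL.ρ T → ∃ S, S ≤ T ∧ RL.ρ S = t) T ?_
  intro T IH t ht
  rcases eq_or_lt_of_le ht with h | h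
  · exact ⟨T, le_rfl, h.symm⟩
  · have hTne : T ≠ ⊥ := by
      rintro rfl
      rw [RL.ρ_bot] at h
      omega
    obtain ⟨U, hU, hUmax⟩ := (Finset.univ.filter fun V : L => V < T).exists_maximal
      ⟨⊥, by simp [bot_lt_iff_ne_bot.2 hTne]⟩
    simp only [Finset.mem_filter, Finset.mem_univ, true_and] at hU hUmax
    have hcovUT : U ⋖ T := ⟨hU, fun V h1 h2 => not_lt_of_ge (hUmax h2 h1.le) h1⟩
    have := RL.ρ_covby U T hcovUT
    obtain ⟨S, hSU, hρ⟩ := IH U hU t (by omega)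
    exact ⟨S, hSU.trans hU.le, hρ⟩

/-- The character group of a finite abelian group is (noncanonically) in bijection with it. -/
lemma addCharEquivSelf (A : Type*) [AddCommGroup A] [Finite A] :
    Nonempty (AddChar A ℂˣ ≃ A) := by
  haveI : NeZero ((Monoid.exponent (Multiplicative A) : ℕ) : ℂ) :=
    ⟨Nat.cast_ne_zero.mpr Monoid.exponent_ne_zero_of_finite⟩
  obtain ⟨e⟩ := CommGroup.monoidHom_mulEquiv_of_hasEnoughRootsOfUnity (Multiplicative A) ℂ
  exact ⟨(AddChar.toMonoidHomEquiv.trans e.toEquiv).trans (MulEquiv.refl _).toEquiv⟩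

/-- The annihilator of a subgroup is in bijection with the character group of the quotient. -/
noncomputable def annEquiv {G : Type*} [AddCommGroup G] (H : AddSubgroup G) :
    {χ : AddChar G ℂˣ // ∀ g ∈ H, χ g = 1} ≃ AddChar (G ⧸ H) ℂˣ where
  toFun χ := AddChar.toAddMonoidHomEquiv.symm
    (QuotientAddGroup.lift H (AddChar.toAddMonoidHomEquiv χ.1)
      (fun g hg => by
        simp only [AddMonoidHom.mem_ker, AddChar.toAddMonoidHomEquiv_apply]
        rw [χ.2 g hg]; rfl))
  invFun ψ := ⟨ψ.compAddMonoidHom (QuotientAddGroup.mk' H), fun g hg => by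
    simp only [AddChar.compAddMonoidHom_apply]
    rw [show (QuotientAddGroup.mk' H) g = 0 from (QuotientAddGroup.eq_zero_iff g).mpr hg,
      AddChar.map_zero_eq_one]⟩
  left_inv χ := by
    apply Subtype.ext
    ext g
    simp [QuotientAddGroup.lift_mk']
  right_inv ψ := by
    ext x
    induction x using QuotientAddGroup.induction_on with
    | H g => simp [QuotientAddGroup.lift_mk']

/-- Counting characters in the annihilator of a subgroup. -/
lemma card_ann {G : Type*} [AddCommGroup G] [Fintype G] (H : AddSubgroup G) :
    Nat.card {χ : AddChar G ℂˣ // ∀ g ∈ H, χ g = 1} * Nat.card H = Nat.card G := by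
  rw [Nat.card_congr (annEquiv H)]
  have h1 : Nat.card (AddChar (G ⧸ H) ℂˣ) = Nat.card (G ⧸ H) := by
    obtain ⟨e⟩ := addCharEquivSelf (G ⧸ H)
    exact Nat.card_congr e
  rw [h1, ← AddSubgroup.card_eq_card_quotient_mul_card_addSubgroup]

variable {G : Type*} [AddCommGroup G] [Fintype G] {RL : RegularLattice L}

/-- `G_σ(S)` as a subgroup of `G`. -/
def RegularSupport.suppSubgroup (RS : RegularSupport L G RL) (S : L) : AddSubgroup G where
  carrier := {g | RS.σ g ≤ S}
  zero_mem' := by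
    have h0 : RS.σ 0 = ⊥ := (RS.supp_zero 0).mpr rfl
    simp [Set.mem_setOf_eq, h0]
  add_mem' := fun {a b} ha hb => le_trans (RS.supp_add a b) (sup_le ha hb)
  neg_mem' := fun {a} ha => by simpa [Set.mem_setOf_eq, RS.supp_neg] using ha

lemma RegularSupport.mem_suppSubgroup (RS : RegularSupport L G RL) {S : L} {g : G} :
    g ∈ RS.suppSubgroup S ↔ RS.σ g ≤ S := Iff.rfl

lemma RegularSupport.card_suppSubgroup (RS : RegularSupport L G RL) (S : L) :
    Nat.card (RS.suppSubgroup S) = RS.γ (RL.ρ S) := by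
  rw [← RS.card_supp S]
  exact Nat.card_congr (Equiv.subtypeEquivRight fun g => Iff.rfl)

/-- Characterization of the dual support: `S ≤ σ*(χ)` iff `χ` is trivial on `G_σ(S)`. -/
lemma RegularSupport.le_dualSupp_iff (RS : RegularSupport L G RL) (χ : AddChar G ℂˣ) (S : L) :
    S ≤ RS.dualSupp χ ↔ ∀ g : G, RS.σ g ≤ S → χ g = 1 := by
  constructor
  · intro hle g hg
    have key : ∀ g : G, RS.σ g ≤ RS.dualSupp χ → χ g = 1 := by
      refine Finset.sup_induction (p := fun T : L => ∀ g : G, RS.σ g ≤ T → χ g = 1) ?_ ?_ ?_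
      · intro g hg
        have hb : RS.σ g = ⊥ := le_bot_iff.mp hg
        rw [(RS.supp_zero g).mp hb, AddChar.map_zero_eq_one]
      · intro S₁ h₁ S₂ h₂ g hg
        have hmem : g ∈ {g : G | RS.σ g ≤ S₁} + {g : G | RS.σ g ≤ S₂} := by
          rw [← RS.supp_sup]
          exact hg
        obtain ⟨a, ha, b, hb, hab⟩ := Set.mem_add.mp hmem
        rw [← hab, AddChar.map_add_eq_mul, h₁ a ha, h₂ b hb, one_mul]
      · intro T hT
        simp only [Finset.mem_filter, Finset.mem_univ, true_and] at hT
        exact hT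
    exact key g (hg.trans hle)
  · intro h
    exact Finset.le_sup (f := id)
      (by simp only [Finset.mem_filter, Finset.mem_univ, true_and]; exact h)

end Auxiliary

/-- If `C ⊆ G` is a non-trivial optimal code (`|C| = |G| / γ_σ(d − 1)` where `d` is the
minimum weight of `C`), then the minimum weight `d*` of the dual code `C*` satisfies
`d* ≥ r − d + 2`, and `C*` is optimal for the dual support: `|C*| = |Ĝ| / γ_{σ*}(d* − 1)`
(where `γ_{σ*}(d* − 1) = |Ĝ_{σ*}(S)|` for any `S` with `r − ρ(S) = d* − 1`).
Here `ω_σ(g) = ρ(σ(g))` and `ω_{σ*}(χ) = r − ρ(σ*(χ))`. -/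
theorem stmt_15 {L : Type*} [Lattice L] [BoundedOrder L] [Fintype L]
    {G : Type*} [AddCommGroup G] [Fintype G] {RL : RegularLattice L}
    (RS : RegularSupport L G RL) (C : AddSubgroup G) (hC₁ : C ≠ ⊥) (hC₂ : C ≠ ⊤)
    (d : ℕ) (hd : IsLeast {n : ℕ | ∃ g ∈ C, g ≠ 0 ∧ RL.ρ (RS.σ g) = n} d)
    (hopt : (Nat.card C : ℚ) = (Fintype.card G : ℚ) / (RS.γ (d - 1) : ℚ))
    (dstar : ℕ)
    (hds : IsLeast {n : ℕ | ∃ χ : AddChar G ℂˣ,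
      (∀ g ∈ C, χ g = 1) ∧ χ ≠ 1 ∧ RL.r - RL.ρ (RS.dualSupp χ) = n} dstar) :
    RL.r - d + 2 ≤ dstar ∧
    ∀ S : L, RL.r - RL.ρ S = dstar - 1 →
      (Nat.card {χ : AddChar G ℂˣ // ∀ g ∈ C, χ g = 1} : ℚ)
        = (Nat.card (AddChar G ℂˣ) : ℚ)
            / (Nat.card {χ : AddChar G ℂˣ // S ≤ RS.dualSupp χ} : ℚ) := by
  classical
  obtain ⟨eG⟩ := addCharEquivSelf G
  haveI : Finite (AddChar G ℂˣ) := Finite.of_equiv G eG.symm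
  -- rank basics
  have hlt : ∀ {S T : L}, S < T → RL.ρ S < RL.ρ T := fun {S T} h => RL.rho_lt S T h
  have hmono : ∀ {S T : L}, S ≤ T → RL.ρ S ≤ RL.ρ T := by
    intro S T h
    rcases h.lt_or_eq with h | h
    · exact (hlt h).le
    · rw [h]
  have hler : ∀ S : L, RL.ρ S ≤ RL.r := fun S => by
    have := hmono (le_top : S ≤ ⊤)
    rwa [RL.ρ_top] at this
  have hγpos : ∀ S : L, 0 < RS.γ (RL.ρ S) := fun S => by
    rw [← RS.card_suppSubgroup S]
    exact Nat.card_pos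
  -- the minimum weight witness
  obtain ⟨g₀, hg₀C, hg₀ne, hg₀ρ⟩ := hd.1
  have hd1 : 1 ≤ d := by
    rcases Nat.eq_zero_or_pos d with h0 | h
    · exfalso
      have hne : RS.σ g₀ ≠ ⊥ := fun hb => hg₀ne ((RS.supp_zero g₀).mp hb)
      have : 0 < RL.ρ (RS.σ g₀) := by
        have := hlt (bot_lt_iff_ne_bot.mpr hne)
        rwa [RL.ρ_bot] at this
      omega
    · exact h
  have hdr : d ≤ RL.r := by
    have := hler (RS.σ g₀)
    omega
  obtain ⟨S₁, hS₁le, hS₁ρ⟩ := RL.exists_rho_le (RS.σ g₀) (d - 1) (by omega)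
  have hγd1 : 0 < RS.γ (d - 1) := by
    have := hγpos S₁
    rwa [hS₁ρ] at this
  have hCpos : 0 < Nat.card C := Nat.card_pos
  -- the optimality equation over ℕ
  have hCcard : Nat.card C * RS.γ (d - 1) = Fintype.card G := by
    rw [eq_div_iff (by exact_mod_cast hγd1.ne' : (RS.γ (d - 1) : ℚ) ≠ 0)] at hopt
    exact_mod_cast hopt
  -- nonzero codewords have weight ≥ d, hence trivial intersection with low-rank supports
  have hAnn : ∀ S : L, RL.ρ S ≤ d - 1 → ∀ g ∈ C, RS.σ g ≤ S → g = 0 := by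
    intro S hS g hgC hgS
    by_contra hne
    have h1 : d ≤ RL.ρ (RS.σ g) := hd.2 ⟨g, hgC, hne, rfl⟩
    have h2 := hmono hgS
    omega
  -- injectivity of the projection C → G ⧸ G_σ(S) for low-rank S
  have hinjAll : ∀ S : L, RL.ρ S ≤ d - 1 →
      Function.Injective (fun c : C => (QuotientAddGroup.mk (c : G) : G ⧸ RS.suppSubgroup S)) := by
    intro S hS c₁ c₂ hcc
    have h1 : -(c₁ : G) + c₂ ∈ RS.suppSubgroup S := (QuotientAddGroup.eq).mp hcc
    rw [neg_add_eq_sub] at h1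
    have h2 : (c₂ : G) - c₁ ∈ C := sub_mem c₂.2 c₁.2
    have h3 : (c₂ : G) - c₁ = 0 := hAnn S hS _ h2 h1
    have := sub_eq_zero.mp h3
    exact Subtype.ext this.symm
  -- for S of rank d - 1 the projection C → G ⧸ G_σ(S) is surjective
  have hB : ∀ S : L, RL.ρ S = d - 1 → ∀ x : G, ∃ c ∈ C, RS.σ (x - c) ≤ S := by
    intro S hSρ x
    have hinj := hinjAll S (le_of_eq hSρ)
    have hq := AddSubgroup.card_eq_card_quotient_mul_card_addSubgroup (RS.suppSubgroup S)
    have hk : Nat.card (RS.suppSubgroup S) = RS.γ (d - 1) := by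
      rw [RS.card_suppSubgroup, hSρ]
    rw [hk] at hq
    have hNG : Nat.card G = Fintype.card G := Nat.card_eq_fintype_card
    have hcards : Nat.card C = Nat.card (G ⧸ RS.suppSubgroup S) := by
      refine Nat.eq_of_mul_eq_mul_right hγd1 ?_
      rw [hCcard, ← hNG, hq]
    have hbij := (Nat.bijective_iff_injective_and_card
      (fun c : C => (QuotientAddGroup.mk (c : G) : G ⧸ RS.suppSubgroup S))).mpr ⟨hinj, hcards⟩
    obtain ⟨c, hc⟩ := hbij.2 (QuotientAddGroup.mk x)
    refine ⟨c, c.2, ?_⟩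
    have h1 : -(c : G) + x ∈ RS.suppSubgroup S := (QuotientAddGroup.eq).mp hc
    rwa [neg_add_eq_sub] at h1
  -- any nontrivial character of the dual code has dual support of rank ≤ d - 2
  have hC1 : ∀ χ : AddChar G ℂˣ, (∀ g ∈ C, χ g = 1) → χ ≠ 1 →
      RL.ρ (RS.dualSupp χ) + 1 ≤ d - 1 := by
    intro χ hχC hχne
    by_contra hcon
    have hge : d - 1 ≤ RL.ρ (RS.dualSupp χ) := by omega
    obtain ⟨S, hSle, hSρ⟩ := RL.exists_rho_le (RS.dualSupp χ) (d - 1) hge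
    have htriv : ∀ g : G, RS.σ g ≤ S → χ g = 1 := fun g hg =>
      ((RS.le_dualSupp_iff χ (RS.dualSupp χ)).mp le_rfl) g (hg.trans hSle)
    apply hχne
    ext x
    rw [AddChar.one_apply]
    obtain ⟨c, hcC, hcS⟩ := hB S hSρ x
    have hx : c + (x - c) = x := by abel
    rw [← hx, AddChar.map_add_eq_mul, hχC c hcC, htriv _ hcS, one_mul]
  -- the minimal dual weight witness
  obtain ⟨χ₀, hχ₀C, hχ₀ne, hχ₀d⟩ := hds.1
  set e := RL.ρ (RS.dualSupp χ₀) with he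
  have hed : e + 1 ≤ d - 1 := hC1 χ₀ hχ₀C hχ₀ne
  constructor
  · omega
  · intro S hS
    have hSr := hler S
    have hρS : RL.ρ S = e + 1 := by omega
    set K := RS.suppSubgroup S with hK
    -- only the trivial character annihilates both C and G_σ(S)
    have htrivK : ∀ χ : AddChar G ℂˣ, (∀ g ∈ C, χ g = 1) →
        (∀ g : G, RS.σ g ≤ S → χ g = 1) → χ = 1 := by
      intro χ h1 h2
      by_contra hne
      have hSle : S ≤ RS.dualSupp χ := (RS.le_dualSupp_iff χ S).mpr h2
      have h3 : RL.ρ S ≤ RL.ρ (RS.dualSupp χ) := hmono hSle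
      have h4 : dstar ≤ RL.r - RL.ρ (RS.dualSupp χ) := hds.2 ⟨χ, h1, hne, rfl⟩
      have h5 : RL.ρ (RS.dualSupp χ) ≤ RL.r := hler _
      omega
    -- C ⊔ K = ⊤
    have hsupK : C ⊔ K = ⊤ := by
      have huniq : ∀ χ : {χ : AddChar G ℂˣ // ∀ g ∈ C ⊔ K, χ g = 1},
          χ = ⟨1, fun g _ => AddChar.one_apply g⟩ := by
        rintro ⟨χ, hχ⟩
        apply Subtype.ext
        exact htrivK χ (fun g hg => hχ g (AddSubgroup.mem_sup_left hg))
          (fun g hg => hχ g (AddSubgroup.mem_sup_right hg))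
      haveI : Unique {χ : AddChar G ℂˣ // ∀ g ∈ C ⊔ K, χ g = 1} :=
        ⟨⟨⟨1, fun g _ => AddChar.one_apply g⟩⟩, huniq⟩
      have h1 : Nat.card {χ : AddChar G ℂˣ // ∀ g ∈ C ⊔ K, χ g = 1} = 1 := Nat.card_unique
      have h2 := card_ann (C ⊔ K)
      rw [h1, one_mul] at h2
      exact AddSubgroup.eq_top_of_card_eq _ h2
    -- the projection C → G ⧸ K is bijective
    have hinj := hinjAll S (by omega)
    have hsurj : Function.Surjective
        (fun c : C => (QuotientAddGroup.mk (c : G) : G ⧸ K)) := by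
      intro x
      induction x using QuotientAddGroup.induction_on with
      | H x =>
        have hx : x ∈ C ⊔ K := hsupK ▸ AddSubgroup.mem_top x
        obtain ⟨y, hy, z, hz, hyz⟩ := AddSubgroup.mem_sup.mp hx
        refine ⟨⟨y, hy⟩, ?_⟩
        show (QuotientAddGroup.mk y : G ⧸ K) = QuotientAddGroup.mk x
        rw [QuotientAddGroup.eq]
        have h1 : -y + x = z := by rw [← hyz]; abel
        rw [h1]
        exact hz
    have hcardC : Nat.card C = Nat.card (G ⧸ K) :=
      Nat.card_eq_of_bijective _ ⟨hinj, hsurj⟩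
    -- |K| = γ(d - 1)
    have hKγ : Nat.card K = RS.γ (d - 1) := by
      have hq := AddSubgroup.card_eq_card_quotient_mul_card_addSubgroup K
      refine Nat.eq_of_mul_eq_mul_left hCpos ?_
      rw [hCcard, ← Nat.card_eq_fintype_card, hq, hcardC]
    -- |C*| = γ(d - 1)
    have hLHS : Nat.card {χ : AddChar G ℂˣ // ∀ g ∈ C, χ g = 1} = RS.γ (d - 1) := by
      refine Nat.eq_of_mul_eq_mul_right hCpos ?_
      rw [card_ann C, Nat.card_eq_fintype_card, ← hCcard, mul_comm]
    -- the denominator equals the annihilator of K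
    have hRHSden : Nat.card {χ : AddChar G ℂˣ // S ≤ RS.dualSupp χ}
        = Nat.card {χ : AddChar G ℂˣ // ∀ g ∈ K, χ g = 1} := by
      refine Nat.card_congr (Equiv.subtypeEquivRight fun χ => ?_)
      rw [RS.le_dualSupp_iff]
      exact ⟨fun h g hg => h g hg, fun h g hg => h g hg⟩
    have hAnnK := card_ann K
    rw [hKγ] at hAnnK
    have hapos : Nat.card {χ : AddChar G ℂˣ // ∀ g ∈ K, χ g = 1} ≠ 0 := by
      intro h0
      rw [h0, zero_mul] at hAnnK
      have : 0 < Nat.card G := Nat.card_pos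
      omega
    have hGch : Nat.card (AddChar G ℂˣ) = Nat.card G := Nat.card_congr eG
    rw [hLHS, hRHSden, hGch, eq_div_iff (by exact_mod_cast hapos)]
    exact_mod_cast (mul_comm (RS.γ (d - 1)) _ ▸ hAnnK)
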